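/- Let k be an algebraically closed field of characteristic p > 0, let A be a finite-dimensional associative unital k-algebra, and let L be a Lie subalgebra of A (for the commutator bracket ⁅x,y⁆ = x y − y x) which is closed under p-th powers, i.e. x ∈ L implies x^p ∈ L. If L is not abelian (there exist x, y ∈ L with x y ≠ y x), then there exists a nonzero element w ∈ L with w^p = 0. -/

import Mathlib

attribute [local instance 100] LieRing.ofAssociativeRing

open Polynomial Finset

section JacobsonAux

variable {k : Type*} [Field k] [IsAlgClosed k] (p : ℕ) [Fact p.Prime] [CharP k p]
  {A : Type*} [Ring A] [Algebra k A] [FiniteDimensional k A]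

/-- Freshman's dream for a finite sum of pairwise commuting elements. -/
lemma aux_sum_pow_char [CharP A p] (n : ℕ) (f : ℕ → A)
    (hf : ∀ i j, Commute (f i) (f j)) :
    (∑ i ∈ Finset.range n, f i) ^ p = ∑ i ∈ Finset.range n, f i ^ p := by
  induction n with
  | zero => simp [zero_pow (Nat.Prime.ne_zero Fact.out)]
  | succ n ih =>
    rw [Finset.sum_range_succ, Finset.sum_range_succ, ← ih,
      add_pow_char_of_commute _ (Commute.sum_left _ _ _ fun i _ => hf i n)]

lemma aux_pmem (L : LieSubalgebra k A) (hpow : ∀ x ∈ L, x ^ p ∈ L)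
    {x : A} (hx : x ∈ L) (i : ℕ) : x ^ p ^ i ∈ L := by
  induction i with
  | zero => simpa using hx
  | succ i ih =>
    rw [pow_succ, pow_mul]
    exact hpow _ ih

/-- Key descent lemma: if `L` has no nonzero `p`-nilpotent elements, every `x ∈ L`
is a linear combination of its higher `p`-th powers. -/
lemma aux_spanp [CharP A p] (L : LieSubalgebra k A) (hpow : ∀ x ∈ L, x ^ p ∈ L)
    (hstar : ∀ w ∈ L, w ^ p = 0 → w = 0)
    {x : A} (hx : x ∈ L) :
    ∃ (n : ℕ) (c : ℕ → k), x = ∑ i ∈ Finset.range n, c i • x ^ p ^ (i + 1) := by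
  have hp1 : 1 < p := (Fact.out : p.Prime).one_lt
  have hpm : ∀ i, x ^ p ^ i ∈ L := aux_pmem p L hpow hx
  have key : ∀ (n : ℕ) (g : ℕ → k),
      (∑ i ∈ Finset.range (n + 1), g i • x ^ p ^ i) = 0 →
      (∃ j < n + 1, g j ≠ 0) →
      ∃ (m : ℕ) (c : ℕ → k), x = ∑ i ∈ Finset.range m, c i • x ^ p ^ (i + 1) := by
    intro n
    induction n with
    | zero =>
      intro g hsum hj
      obtain ⟨j, hj1, hj0⟩ := hj
      have hj0' : j = 0 := by omega
      subst hj0'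
      have : g 0 • x = 0 := by simpa using hsum
      have hx0 : x = 0 := by
        rcases smul_eq_zero.mp this with h | h
        · exact absurd h hj0
        · exact h
      exact ⟨0, fun _ => 0, by simp [hx0]⟩
    | succ n ih =>
      intro g hsum hj
      by_cases hg0 : g 0 = 0
      · -- take p-th roots and descend
        obtain ⟨j, hjlt, hjne⟩ := hj
        have hj1 : 1 ≤ j := by
          rcases Nat.eq_zero_or_pos j with h | h
          · exact absurd (h ▸ hg0) hjne
          · exact h
        choose r hr using fun i : ℕ =>
          IsAlgClosed.exists_pow_nat_eq (k := k) (g (i + 1)) (n := p) (by omega)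
        set v : A := ∑ i ∈ Finset.range (n + 1), r i • x ^ p ^ i with hv
        have hvL : v ∈ L := by
          refine Submodule.sum_mem L.toSubmodule (fun i _ => ?_)
          exact Submodule.smul_mem _ _ (hpm i)
        have hsum' : ∑ i ∈ Finset.range (n + 1), g (i + 1) • x ^ p ^ (i + 1) = 0 := by
          have := Finset.sum_range_succ' (fun i => g i • x ^ p ^ i) (n + 1)
          rw [hsum] at this
          simpa [hg0] using this.symm
        have hvp : v ^ p = 0 := by
          rw [hv, aux_sum_pow_char p _ _ (fun i j => ((Commute.refl x).pow_pow _ _).smul_left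
            (r i) |>.smul_right (r j))]
          calc ∑ i ∈ Finset.range (n + 1), (r i • x ^ p ^ i) ^ p
              = ∑ i ∈ Finset.range (n + 1), g (i + 1) • x ^ p ^ (i + 1) := by
                refine Finset.sum_congr rfl (fun i _ => ?_)
                rw [_root_.smul_pow, hr i, ← pow_mul, ← pow_succ]
            _ = 0 := hsum'
        have hv0 : v = 0 := hstar v hvL hvp
        refine ih r (by rw [← hv]; exact hv0) ⟨j - 1, by omega, ?_⟩
        intro hrz
        apply hjne
        have : (j - 1) + 1 = j := by omega
        rw [← this, ← hr (j - 1), hrz, zero_pow (by omega)]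
      · -- solve for x
        refine ⟨n + 1, fun i => -(g 0)⁻¹ * g (i + 1), ?_⟩
        have hsplit := Finset.sum_range_succ' (fun i => g i • x ^ p ^ i) (n + 1)
        rw [hsum] at hsplit
        have h1 : ∑ i ∈ Finset.range (n + 1), g (i + 1) • x ^ p ^ (i + 1) = -(g 0 • x) := by
          have := hsplit.symm
          simpa [eq_neg_iff_add_eq_zero] using this
        calc x = (g 0)⁻¹ • (g 0 • x) := by
              rw [smul_smul, inv_mul_cancel₀ hg0, one_smul]
          _ = (-(g 0)⁻¹) • ∑ i ∈ Finset.range (n + 1), g (i + 1) • x ^ p ^ (i + 1) := by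
              rw [h1, smul_neg, neg_smul, neg_neg]
          _ = ∑ i ∈ Finset.range (n + 1), (-(g 0)⁻¹ * g (i + 1)) • x ^ p ^ (i + 1) := by
              rw [Finset.smul_sum]
              exact Finset.sum_congr rfl (fun i _ => by rw [smul_smul, neg_mul])
  -- produce a nontrivial linear relation among the `x ^ p ^ i`
  have hnli : ¬ LinearIndependent k (fun i : ℕ => x ^ p ^ i) :=
    Module.Finite.not_linearIndependent_of_infinite _
  rw [linearIndependent_iff'] at hnli
  push_neg at hnli
  obtain ⟨s, g, hsum, j, hjs, hjne⟩ := hnli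
  set N : ℕ := s.sup id with hN
  have hsub : s ⊆ Finset.range (N + 1) := fun i hi =>
    Finset.mem_range.mpr (Nat.lt_succ_of_le (Finset.le_sup (f := id) hi))
  set g' : ℕ → k := fun i => if i ∈ s then g i else 0 with hg'
  have hsum' : ∑ i ∈ Finset.range (N + 1), g' i • x ^ p ^ i = 0 := by
    rw [← Finset.sum_subset hsub (fun i _ hin => by simp [hg', hin])]
    rw [← hsum]
    exact Finset.sum_congr rfl (fun i hi => by simp [hg', hi])
  exact key N g' hsum' ⟨j, Finset.mem_range.mp (hsub hjs), by simpa [hg', hjs] using hjne⟩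

/-- If `a y = y a + μ • y` then `a` commutes with `y ^ p`. -/
lemma aux_eig_comm {a y : A} {μ : k} (h : a * y = y * a + μ • y) :
    a * y ^ p = y ^ p * a := by
  have hgen : ∀ m : ℕ, a * y ^ m = y ^ m * a + ((m : k) * μ) • y ^ m := by
    intro m
    induction m with
    | zero => simp
    | succ m ih =>
      have hY : y ^ (m + 1) = y ^ m * y := pow_succ y m
      push_cast
      calc a * y ^ (m + 1) = (a * y ^ m) * y := by rw [hY, mul_assoc]
        _ = (y ^ m * a) * y + ((m : k) * μ) • (y ^ m * y) := by
            rw [ih, add_mul, smul_mul_assoc]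
        _ = y ^ m * (y * a + μ • y) + ((m : k) * μ) • y ^ (m + 1) := by
            rw [mul_assoc, h, hY]
        _ = y ^ (m + 1) * a + (((m : k) + 1) * μ) • y ^ (m + 1) := by
            rw [mul_add, ← mul_assoc, ← hY, mul_smul_comm, ← hY, add_assoc]
            congr 1
            rw [add_mul, one_mul, add_smul, add_comm]
  have := hgen p
  rw [CharP.cast_eq_zero k p, zero_mul, zero_smul, add_zero] at this
  exact this

end JacobsonAux

/-- Jacobson's lemma: over an algebraically closed field `k` of characteristic
`p > 0`, a Lie subalgebra `L` of a finite-dimensional associative unital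
`k`-algebra `A` (with the commutator bracket) which is closed under `p`-th powers
and is not abelian contains a nonzero element `w` with `w ^ p = 0`. -/
theorem stmt_6 {k : Type*} [Field k] [IsAlgClosed k] (p : ℕ) [Fact p.Prime]
    [CharP k p] {A : Type*} [Ring A] [Algebra k A] [FiniteDimensional k A]
    (L : LieSubalgebra k A)
    (hpow : ∀ x ∈ L, x ^ p ∈ L)
    (hnab : ∃ x ∈ L, ∃ y ∈ L, x * y ≠ y * x) :
    ∃ w ∈ L, w ≠ 0 ∧ w ^ p = 0 := by
  by_contra hcon
  push_neg at hcon
  have hstar : ∀ w ∈ L, w ^ p = 0 → w = 0 := by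
    intro w hw hwp
    by_contra h
    exact hcon w hw h hwp
  obtain ⟨a, ha, b, hb, hab⟩ := hnab
  have hbne : b ≠ 0 := by rintro rfl; simp at hab
  have hp1 : 1 < p := (Fact.out : p.Prime).one_lt
  haveI : Nontrivial A := ⟨⟨a * b, b * a, hab⟩⟩
  haveI : CharP A p := charP_of_injective_algebraMap (algebraMap k A).injective p
  haveI : Nontrivial (Module.End k A) := ⟨⟨1, 0, by
    intro h
    have := LinearMap.ext_iff.mp h 1
    simp at this⟩⟩
  haveI : CharP (Module.End k A) p :=
    charP_of_injective_algebraMap (algebraMap k (Module.End k A)).injective p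
  -- the adjoint map of `a` on `A`
  haveI : Nontrivial (Module.End k L.toSubmodule) := ⟨⟨1, 0, by
    intro h
    have := LinearMap.ext_iff.mp h ⟨b, hb⟩
    rw [Subtype.ext_iff] at this
    simp at this
    exact hbne this⟩⟩
  set D : Module.End k A := LinearMap.mulLeft k a - LinearMap.mulRight k a with hD
  have hDapp : ∀ v : A, D v = a * v - v * a := fun v => by
    simp [hD, LinearMap.sub_apply, LinearMap.mulLeft_apply, LinearMap.mulRight_apply]
  have hDpow : ∀ (m : ℕ) (v : A), (D ^ p ^ m) v = a ^ p ^ m * v - v * a ^ p ^ m := by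
    intro m v
    rw [hD, sub_pow_char_pow_of_commute _ _ (LinearMap.commute_mulLeft_right a a),
      LinearMap.pow_mulLeft, LinearMap.pow_mulRight]
    simp [LinearMap.sub_apply, LinearMap.mulLeft_apply, LinearMap.mulRight_apply]
  have hDL : ∀ v ∈ L.toSubmodule, D v ∈ L.toSubmodule := by
    intro v hv
    rw [LieSubalgebra.mem_toSubmodule] at hv ⊢
    rw [hDapp, ← Ring.lie_def]
    exact L.lie_mem ha hv
  -- the restriction of `D` to `L`
  set T : Module.End k L.toSubmodule := D.restrict hDL with hT
  have hTapp : ∀ v : L.toSubmodule, (T v : A) = a * v - v * a := fun v => by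
    rw [hT, LinearMap.restrict_apply]
    exact hDapp v
  have hTpow : ∀ (m : ℕ) (v : L.toSubmodule),
      ((T ^ p ^ m) v : A) = a ^ p ^ m * v - v * a ^ p ^ m := by
    intro m v
    rw [hT, Module.End.pow_restrict, LinearMap.restrict_apply]
    exact hDpow m v
  obtain ⟨n, c, hc⟩ := aux_spanp p L hpow hstar ha
  have hTrel : T = ∑ i ∈ Finset.range n, c i • T ^ p ^ (i + 1) := by
    ext v
    have hco : ((∑ i ∈ Finset.range n, c i • T ^ p ^ (i + 1)) v : A)
        = ∑ i ∈ Finset.range n, c i • ((T ^ p ^ (i + 1)) v : A) := by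
      rw [LinearMap.sum_apply]
      rw [Submodule.coe_sum]
      exact Finset.sum_congr rfl (fun i _ => by
        rw [LinearMap.smul_apply, SetLike.val_smul])
    rw [hTapp, hco]
    calc a * (v : A) - (v : A) * a
        = (∑ i ∈ Finset.range n, c i • a ^ p ^ (i + 1)) * v
          - v * (∑ i ∈ Finset.range n, c i • a ^ p ^ (i + 1)) := by rw [← hc]
      _ = ∑ i ∈ Finset.range n, c i • (a ^ p ^ (i + 1) * v - v * a ^ p ^ (i + 1)) := by
          rw [Finset.sum_mul, Finset.mul_sum, ← Finset.sum_sub_distrib]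
          exact Finset.sum_congr rfl (fun i _ => by
            rw [smul_mul_assoc, mul_smul_comm, smul_sub])
      _ = ∑ i ∈ Finset.range n, c i • ((T ^ p ^ (i + 1)) v : A) := by
          exact Finset.sum_congr rfl (fun i _ => by rw [hTpow])
  have hTne : T ≠ 0 := by
    intro h
    have hbv : (T ⟨b, hb⟩ : A) = a * b - b * a := hTapp ⟨b, hb⟩
    rw [h] at hbv
    simp only [LinearMap.zero_apply, ZeroMemClass.coe_zero] at hbv
    exact hab (sub_eq_zero.mp hbv.symm)
  -- polynomial relation
  set q : Polynomial k := X - ∑ i ∈ Finset.range n, C (c i) * X ^ p ^ (i + 1) with hq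
  have haq : Polynomial.aeval T q = 0 := by
    rw [hq, map_sub, map_sum, aeval_X]
    have : ∀ i ∈ Finset.range n,
        Polynomial.aeval T (C (c i) * X ^ p ^ (i + 1)) = c i • T ^ p ^ (i + 1) := by
      intro i _
      rw [map_mul, map_pow, aeval_X, aeval_C, ← Algebra.smul_def]
    rw [Finset.sum_congr rfl this, ← hTrel, sub_self]
  have hint : IsIntegral k T := LinearMap.isIntegral T
  have hdvd : minpoly k T ∣ q := minpoly.dvd k T haq
  by_cases hroot : ∃ μ : k, μ ≠ 0 ∧ (minpoly k T).IsRoot μ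
  · -- eigenvector with nonzero eigenvalue: contradiction via aux_spanp for y
    obtain ⟨μ, hμ, hr⟩ := hroot
    have hev : Module.End.HasEigenvalue T μ := Module.End.hasEigenvalue_iff_isRoot.mpr hr
    obtain ⟨y, hyv, hyne⟩ := hev.exists_hasEigenvector
    have hyA : a * (y : A) = (y : A) * a + μ • (y : A) := by
      have h1 : (T y : A) = μ • (y : A) := by
        rw [Module.End.HasEigenvector.apply_eq_smul ⟨hyv, hyne⟩]
        rfl
      rw [hTapp, sub_eq_iff_eq_add] at h1
      rw [h1, add_comm]
    have hyL : (y : A) ∈ L := (LieSubalgebra.mem_toSubmodule (L' := L)).mp y.2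
    obtain ⟨ny, d, hd⟩ := aux_spanp p L hpow hstar hyL
    have hcp : a * (y : A) ^ p = (y : A) ^ p * a := aux_eig_comm p hyA
    have hcomm : ∀ i : ℕ, a * (y : A) ^ p ^ (i + 1) = (y : A) ^ p ^ (i + 1) * a := by
      intro i
      have h2 : (y : A) ^ p ^ (i + 1) = ((y : A) ^ p) ^ p ^ i := by
        rw [← pow_mul, ← pow_succ']
      rw [h2]
      exact Commute.pow_right hcp (p ^ i)
    have hay : a * (y : A) = (y : A) * a := by
      conv_lhs => rw [hd]
      conv_rhs => rw [hd]
      rw [Finset.mul_sum, Finset.sum_mul]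
      exact Finset.sum_congr rfl (fun i _ => by
        rw [mul_smul_comm, smul_mul_assoc, hcomm i])
    rw [hay, left_eq_add] at hyA
    rcases smul_eq_zero.mp hyA with h | h
    · exact hμ h
    · exact hyne (by apply Subtype.ext; simpa using h)
  · -- no nonzero root: minpoly is a power of X, forcing T = 0 or coeff contradiction
    push_neg at hroot
    have hmon : (minpoly k T).Monic := minpoly.monic hint
    have hsplit : Polynomial.Splits (minpoly k T) :=
      IsAlgClosed.splits (minpoly k T)
    have hdeg : 0 < (minpoly k T).natDegree := minpoly.natDegree_pos hint
    have hroots0 : ∀ r ∈ (minpoly k T).roots, r = 0 := by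
      intro r hrr
      by_contra hrne
      exact hroot r hrne (Polynomial.isRoot_of_mem_roots hrr)
    have hM : minpoly k T = X ^ (minpoly k T).natDegree := by
      have hcard : (minpoly k T).roots.card = (minpoly k T).natDegree :=
        (Polynomial.splits_iff_card_roots).mp hsplit
      have hrep : (minpoly k T).roots
          = Multiset.replicate (minpoly k T).natDegree 0 :=
        Multiset.eq_replicate.mpr ⟨hcard, fun b hbm => hroots0 b hbm⟩
      have := hsplit.eq_prod_roots_of_monic hmon
      rw [hrep] at this
      simpa [Multiset.map_replicate, Multiset.prod_replicate] using this
    rcases Nat.lt_or_ge (minpoly k T).natDegree 2 with h2 | h2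
    · -- degree 1: minpoly = X, so T = 0
      have hdeg1 : (minpoly k T).natDegree = 1 := by omega
      have hX : minpoly k T = X := by rw [hM, hdeg1, pow_one]
      have := minpoly.aeval k T
      rw [hX, aeval_X] at this
      exact hTne this
    · -- degree ≥ 2 : X^2 divides q, but q.coeff 1 = 1
      have hdvd2 : (X : Polynomial k) ^ 2 ∣ q :=
        dvd_trans (hM ▸ pow_dvd_pow X h2) hdvd
      have hc1 : q.coeff 1 = 0 := Polynomial.X_pow_dvd_iff.mp hdvd2 1 (by norm_num)
      have hc1' : q.coeff 1 = 1 := by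
        rw [hq, Polynomial.coeff_sub, Polynomial.coeff_X_one, Polynomial.finset_sum_coeff]
        have hz : ∀ i ∈ Finset.range n, (C (c i) * X ^ p ^ (i + 1)).coeff 1 = 0 := by
          intro i _
          rw [Polynomial.coeff_C_mul, Polynomial.coeff_X_pow]
          have : 1 ≠ p ^ (i + 1) := by
            have : p ≤ p ^ (i + 1) := Nat.le_self_pow (by omega) p
            omega
          simp [this]
        rw [Finset.sum_congr rfl hz]
        simp
      rw [hc1] at hc1'
      exact one_ne_zero hc1'.symm
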